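/- arXiv:1111.6612 — 5 statements merged into one kernel-verified Lean document; each statement's English description precedes it below -/
import Mathlib

section
/- Vanishing property: if A and B are alphabets of cardinalities m and n respectively, and the diagram of a partition I is not contained in the (m,n)-hook, then S_I(A − B) = 0. -/
open scoped Classical

noncomputable section

/-- The generating series `∏_{a ∈ A} (1 - a z)` of an alphabet `A`. -/
def genS {R : Type*} [CommRing R] (A : Multiset R) : PowerSeries R :=
  (A.map (fun a => 1 - PowerSeries.C a * PowerSeries.X)).prod

/-- The complete function `S_j(A - B)` of a difference of alphabets, defined by the
generating series `∑ S_j(A-B) z^j = ∏_{b∈B}(1-bz) / ∏_{a∈A}(1-az)`. -/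
def SD {R : Type*} [CommRing R] (A B : Multiset R) (j : ℤ) : R :=
  if j < 0 then 0
  else PowerSeries.coeff j.toNat (genS B * PowerSeries.invOfUnit (genS A) 1)

/-- The Schur function `S_I(A - B)` for an index sequence `I` (written in the weakly
increasing convention), given by the Jacobi–Trudi determinant `|S_{i_q + q - p}(A-B)|`. -/
def SchurD {R : Type*} [CommRing R] (A B : Multiset R) {s : ℕ} (I : Fin s → ℕ) : R :=
  Matrix.det (Matrix.of fun p q : Fin s => SD A B ((I q : ℤ) + (q : ℤ) - (p : ℤ)))

/-- The resultant `R(A,B) = ∏_{a∈A, b∈B} (a - b)` of two alphabets. -/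
def Res {R : Type*} [CommRing R] (A B : Multiset R) : R :=
  (A.map (fun a => (B.map (fun b => a - b)).prod)).prod

lemma genS_constantCoeff {R : Type*} [CommRing R] (A : Multiset R) :
    PowerSeries.constantCoeff (genS A) = 1 := by
  unfold genS
  rw [← Multiset.prod_hom _ (PowerSeries.constantCoeff (R := R))]
  rw [Multiset.map_map]
  simp

lemma genS_eq_coe {R : Type*} [CommRing R] (A : Multiset R) :
    genS A = ((A.map (fun a => 1 - Polynomial.C a * Polynomial.X)).prod : Polynomial R) := by
  unfold genS
  rw [show ((((A.map (fun a => 1 - Polynomial.C a * Polynomial.X)).prod : Polynomial R)) : PowerSeries R)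
      = Polynomial.coeToPowerSeries.ringHom (R := R) ((A.map (fun a => 1 - Polynomial.C a * Polynomial.X)).prod) from rfl]
  rw [← Multiset.prod_hom _ (Polynomial.coeToPowerSeries.ringHom (R := R))]
  rw [Multiset.map_map]
  simp [Polynomial.coeToPowerSeries.ringHom_apply, Function.comp_def]

lemma genS_coeff_zero {R : Type*} [CommRing R] (A : Multiset R) {k : ℕ} (hk : Multiset.card A < k) :
    PowerSeries.coeff k (genS A) = 0 := by
  rw [genS_eq_coe, Polynomial.coeff_coe]
  apply Polynomial.coeff_eq_zero_of_natDegree_lt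
  calc ((A.map (fun a => 1 - Polynomial.C a * Polynomial.X)).prod).natDegree
      ≤ ((A.map (fun a => 1 - Polynomial.C a * Polynomial.X)).map Polynomial.natDegree).sum :=
        Polynomial.natDegree_multiset_prod_le _
    _ ≤ Multiset.card A := by
        rw [Multiset.map_map]
        calc _ ≤ (Multiset.map (fun _ => 1) A).sum := by
                apply Multiset.sum_map_le_sum_map
                intro a _
                simp only [Function.comp_apply]
                apply le_trans (Polynomial.natDegree_sub_le _ _)
                simp only [Polynomial.natDegree_one, max_le_iff, Nat.zero_le, true_and]
                exact le_trans (Polynomial.natDegree_C_mul_le _ _) Polynomial.natDegree_X_le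
          _ = Multiset.card A := by simp [Multiset.map_const']
    _ < k := hk

lemma key_rec {R : Type*} [CommRing R] (A B : Multiset R) {k : ℤ}
    (hk : (Multiset.card B : ℤ) < k) :
    ∑ t ∈ Finset.range (Multiset.card A + 1),
      PowerSeries.coeff t (genS A) * SD A B (k - t) = 0 := by
  set m := Multiset.card A with hm
  set c : ℕ → R := fun i => PowerSeries.coeff i (genS A) with hc
  set u : ℕ → R := fun j => PowerSeries.coeff j (genS B * PowerSeries.invOfUnit (genS A) 1)
    with hu
  have hk0 : 0 ≤ k := le_trans (by positivity) (le_of_lt hk)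
  obtain ⟨K, hKk⟩ : ∃ K : ℕ, (K : ℤ) = k := ⟨k.toNat, Int.toNat_of_nonneg hk0⟩
  have hKn : Multiset.card B < K := by omega
  have hps : genS A * (genS B * PowerSeries.invOfUnit (genS A) 1) = genS B := by
    rw [mul_left_comm, PowerSeries.mul_invOfUnit (genS A) 1 (by simp [genS_constantCoeff]),
      mul_one]
  have hcoeff : ∑ i ∈ Finset.range (K + 1), c i * u (K - i) = 0 := by
    have := congrArg (PowerSeries.coeff K) hps
    rw [PowerSeries.coeff_mul, genS_coeff_zero B hKn,
      Finset.Nat.sum_antidiagonal_eq_sum_range_succ_mk] at this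
    exact this
  have h1 : ∑ t ∈ Finset.range (m + 1), c t * SD A B (k - t)
      = ∑ t ∈ Finset.range (min m K + 1), c t * SD A B (k - t) := by
    refine (Finset.sum_subset (Finset.range_subset_range.mpr (by omega)) ?_).symm
    intro t ht1 ht2
    rw [Finset.mem_range] at ht1 ht2
    have hKt : K < t := by omega
    have : k - t < 0 := by omega
    simp [SD, this]
  have h2 : ∑ i ∈ Finset.range (K + 1), c i * u (K - i)
      = ∑ i ∈ Finset.range (min m K + 1), c i * u (K - i) := by
    refine (Finset.sum_subset (Finset.range_subset_range.mpr (by omega)) ?_).symm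
    intro t ht1 ht2
    rw [Finset.mem_range] at ht1 ht2
    have hmt : m < t := by omega
    simp [hc, genS_coeff_zero A hmt]
  rw [h1, ← hcoeff, h2]
  apply Finset.sum_congr rfl
  intro t ht
  rw [Finset.mem_range] at ht
  congr 1
  have h3 : ¬ (k - t < 0) := by omega
  rw [SD, if_neg h3, hu]
  have h4 : (k - (t:ℤ)).toNat = K - t := by omega
  rw [h4]

lemma card_filter_ge_fin (s r : ℕ) :
    (Finset.univ.filter (fun q : Fin s => r ≤ (q:ℕ))).card = s - r := by
  rcases le_or_gt s r with h | h
  · rw [Finset.card_eq_zero.mpr, Nat.sub_eq_zero_of_le h]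
    ext q
    simp only [Finset.mem_filter, Finset.mem_univ, true_and, Finset.notMem_empty, iff_false,
      not_le]
    exact lt_of_lt_of_le q.isLt h
  · have : (Finset.univ.filter (fun q : Fin s => r ≤ (q:ℕ))) = Finset.Ici ⟨r, h⟩ := by
      ext q; simp [Fin.le_def]
    rw [this, Fin.card_Ici]

lemma schur_vanishing_gen {R : Type*} [CommRing R] (𝔸 𝔹 : Multiset R) {s : ℕ}
    (I : Fin s → ℕ) (hI : Monotone I)
    (hhook : Multiset.card 𝔸 <
      (Finset.univ.filter (fun p : Fin s => Multiset.card 𝔹 < I p)).card) :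
    SchurD 𝔸 𝔹 I = 0 := by
  set m := Multiset.card 𝔸 with hm
  set n := Multiset.card 𝔹 with hn
  set T := (Finset.univ.filter (fun p : Fin s => n < I p)).card with hT
  set r := s - T with hr
  have hTs : T ≤ s := le_trans (Finset.card_filter_le _ _) (by simp)
  have hmT : m < T := hhook
  -- every index ≥ r has a big part
  have hbig : ∀ q : Fin s, r ≤ (q:ℕ) → n < I q := by
    intro q hq
    by_contra hnq
    push_neg at hnq
    have hsub : (Finset.univ.filter (fun p : Fin s => n < I p))
        ⊆ (Finset.univ.filter (fun p : Fin s => (q:ℕ) + 1 ≤ (p:ℕ))) := by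
      intro p hp
      rw [Finset.mem_filter] at hp ⊢
      refine ⟨Finset.mem_univ _, ?_⟩
      by_contra hpq
      push_neg at hpq
      have : p ≤ q := by rw [Fin.le_def]; omega
      exact absurd (lt_of_lt_of_le hp.2 (hI this)) (not_lt.mpr hnq)
    have := Finset.card_le_card hsub
    rw [card_filter_ge_fin] at this
    omega
  -- the coefficients of genS 𝔸
  set c : ℕ → R := fun i => PowerSeries.coeff i (genS 𝔸) with hc
  have hc0 : c 0 = 1 := by
    rw [hc]; simp only [PowerSeries.coeff_zero_eq_constantCoeff]
    exact genS_constantCoeff 𝔸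
  set M : Matrix (Fin s) (Fin s) R :=
    Matrix.of (fun p q : Fin s => SD 𝔸 𝔹 ((I q : ℤ) + (q : ℤ) - (p : ℤ))) with hM
  set E : Matrix (Fin s) (Fin s) R :=
    Matrix.of (fun p p' : Fin s =>
      if (p:ℕ) + m < s then
        (if (p:ℕ) ≤ (p':ℕ) ∧ (p':ℕ) ≤ (p:ℕ) + m then c ((p':ℕ) - (p:ℕ)) else 0)
      else (if p' = p then 1 else 0)) with hE
  have hEtri : E.BlockTriangular id := by
    intro p p' hpp'
    simp only [id] at hpp'
    have h1 : ¬ ((p:ℕ) ≤ (p':ℕ) ∧ (p':ℕ) ≤ (p:ℕ) + m) := by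
      rw [Fin.lt_def] at hpp'; omega
    have h2 : p' ≠ p := ne_of_lt hpp'
    simp only [hE, Matrix.of_apply, h1, h2, if_false]
    split <;> rfl
  have hEdet : E.det = 1 := by
    rw [Matrix.det_of_upperTriangular hEtri]
    apply Finset.prod_eq_one
    intro p _
    simp only [hE, Matrix.of_apply, le_refl, Nat.le_add_right, and_self, if_true,
      Nat.sub_self, hc0]
    split <;> simp [hc0]
  -- entries of E * M in the low rows
  have hEM : ∀ p q : Fin s, (p:ℕ) + m < s →
      (E * M) p q = ∑ t ∈ Finset.range (m + 1),
        c t * SD 𝔸 𝔹 (((I q : ℤ) + (q : ℤ) - (p : ℤ)) - t) := by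
    intro p q hpm
    rw [Matrix.mul_apply]
    have step1 : ∀ p' : Fin s, E p p' * M p' q =
        if (p:ℕ) ≤ (p':ℕ) ∧ (p':ℕ) ≤ (p:ℕ) + m then c ((p':ℕ) - (p:ℕ)) * M p' q else 0 := by
      intro p'
      simp only [hE, Matrix.of_apply, if_pos hpm]
      split <;> simp
    rw [Finset.sum_congr rfl (fun p' _ => step1 p'), Finset.sum_ite, Finset.sum_const_zero,
      add_zero]
    refine Finset.sum_nbij' (fun p' => (p':ℕ) - (p:ℕ))
      (fun t => if h : (p:ℕ) + t < s then ⟨(p:ℕ) + t, h⟩ else p) ?_ ?_ ?_ ?_ ?_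
    · intro p' hp'
      rw [Finset.mem_filter] at hp'
      rw [Finset.mem_range]
      show (p':ℕ) - (p:ℕ) < m + 1
      omega
    · intro t ht
      rw [Finset.mem_range] at ht
      have h : (p:ℕ) + t < s := by omega
      show (if h : (p:ℕ) + t < s then (⟨(p:ℕ) + t, h⟩ : Fin s) else p) ∈ _
      rw [dif_pos h, Finset.mem_filter]
      exact ⟨Finset.mem_univ _, by simp; omega⟩
    · intro p' hp'
      rw [Finset.mem_filter] at hp'
      have h : (p:ℕ) + ((p':ℕ) - (p:ℕ)) < s := by omega
      show (if h : (p:ℕ) + ((p':ℕ) - (p:ℕ)) < s then (⟨(p:ℕ) + ((p':ℕ) - (p:ℕ)), h⟩ : Fin s) else p) = p'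
      rw [dif_pos h]
      ext
      simp
      omega
    · intro t ht
      rw [Finset.mem_range] at ht
      have h : (p:ℕ) + t < s := by omega
      simp only [dif_pos h]
      simp
    · intro p' hp'
      rw [Finset.mem_filter] at hp'
      congr 1
      simp only [hM, Matrix.of_apply]
      congr 1
      have := hp'.2.1
      omega
  -- zero entries in the block
  have hzero : ∀ p q : Fin s, (p:ℕ) ≤ r → r ≤ (q:ℕ) → (E * M) p q = 0 := by
    intro p q hp hq
    have hpm : (p:ℕ) + m < s := by omega
    rw [hEM p q hpm]
    have hk : (n:ℤ) < (I q : ℤ) + (q:ℤ) - (p:ℤ) := by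
      have h1 := hbig q hq
      have h2 : (p:ℕ) ≤ (q:ℕ) := le_trans hp hq
      omega
    exact key_rec 𝔸 𝔹 hk
  -- conclude by expanding the determinant
  have hSM : SchurD 𝔸 𝔹 I = M.det := rfl
  rw [hSM, ← one_mul M.det, ← hEdet, ← Matrix.det_mul, Matrix.det_apply]
  apply Finset.sum_eq_zero
  intro σ _
  obtain ⟨q, hq1, hq2⟩ : ∃ q : Fin s, r ≤ (q:ℕ) ∧ ((σ q : Fin s):ℕ) ≤ r := by
    by_contra hcon
    push_neg at hcon
    have hmaps : ∀ q ∈ Finset.univ.filter (fun q : Fin s => r ≤ (q:ℕ)),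
        σ q ∈ Finset.univ.filter (fun p : Fin s => r + 1 ≤ (p:ℕ)) := by
      intro q hq
      rw [Finset.mem_filter] at hq ⊢
      exact ⟨Finset.mem_univ _, hcon q hq.2⟩
    have hcard := Finset.card_le_card_of_injOn σ hmaps
      (fun a _ b _ h => σ.injective h)
    rw [card_filter_ge_fin, card_filter_ge_fin] at hcard
    omega
  have hprod : ∏ i : Fin s, (E * M) (σ i) i = 0 :=
    Finset.prod_eq_zero (Finset.mem_univ q) (hzero (σ q) q hq2 hq1)
  rw [hprod, smul_zero]

/-- Vanishing property: if `A`, `B` are alphabets of cardinalities `m`, `n` and the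
partition `I` is not contained in the `(m,n)`-hook (i.e. more than `m` parts of `I`
exceed `n`), then `S_I(A − B) = 0`. -/
theorem schur_vanishing {σ : Type*} (A B : Finset σ) (m n : ℕ)
    (hA : A.card = m) (hB : B.card = n) {s : ℕ} (I : Fin s → ℕ) (hI : Monotone I)
    (hhook : m < (Finset.univ.filter (fun p : Fin s => n < I p)).card) :
    SchurD (A.val.map (MvPolynomial.X (R := ℤ))) (B.val.map MvPolynomial.X) I = 0 := by
  apply schur_vanishing_gen _ _ I hI
  rwa [Multiset.card_map, Multiset.card_map, show A.val.card = m from hA,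
    show B.val.card = n from hB]

end
end

section
/- Transformation Lemma for multi-Schur functions: let D^0, D^1, ..., D^{s−1} be alphabets with card(D^i) ≤ i. Then the multi-Schur function S_I(A^1 − B^1, ..., A^s − B^s) = |S_{i_q+q−p}(A^q − B^q)|_{1≤p,q≤s} equals the determinant |S_{i_q+q−p}(A^q − B^q − D^{s−p})|_{1≤p,q≤s}. -/
open scoped Classical

noncomputable section

section Aux
variable {R : Type*} [CommRing R]

lemma genS_coeff_zero_s8 (D : Multiset R) : PowerSeries.coeff 0 (genS D) = 1 := by
  rw [PowerSeries.coeff_zero_eq_constantCoeff]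
  unfold genS
  rw [map_multiset_prod]
  simp [Multiset.map_map]

lemma genS_coeff_eq_zero (D : Multiset R) : ∀ {n : ℕ}, Multiset.card D < n →
    PowerSeries.coeff n (genS D) = 0 := by
  induction D using Multiset.induction with
  | empty =>
    intro n hn
    simp only [Multiset.card_zero] at hn
    unfold genS
    simp [PowerSeries.coeff_one, hn.ne']
  | cons a D ih =>
    intro n hn
    have hg : genS (a ::ₘ D) = (1 - PowerSeries.C a * PowerSeries.X) * genS D := by
      unfold genS; rw [Multiset.map_cons, Multiset.prod_cons]
    simp only [Multiset.card_cons] at hn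
    obtain ⟨m, rfl⟩ : ∃ m, n = m + 1 := ⟨n - 1, by omega⟩
    rw [hg, sub_mul, one_mul, mul_assoc, map_sub, PowerSeries.coeff_C_mul,
      PowerSeries.coeff_succ_X_mul, ih (by omega), ih (by omega), mul_zero, sub_zero]

lemma genS_add (B D : Multiset R) : genS (B + D) = genS B * genS D := by
  unfold genS; rw [Multiset.map_add, Multiset.prod_add]

lemma SD_add (A B D : Multiset R) (j : ℤ) {m : ℕ} (hm : Multiset.card D < m) :
    SD A (B + D) j
      = ∑ k ∈ Finset.range m, PowerSeries.coeff k (genS D) * SD A B (j - k) := by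
  by_cases hj : j < 0
  · rw [SD, if_pos hj]
    symm
    apply Finset.sum_eq_zero
    intro k _
    rw [SD, if_pos (by omega), mul_zero]
  · push_neg at hj
    set n := j.toNat with hn
    have hjn : (n : ℤ) = j := Int.toNat_of_nonneg hj
    set F := genS B * PowerSeries.invOfUnit (genS A) 1 with hF
    set h : ℕ → R := fun k => PowerSeries.coeff k (genS D) * SD A B (j - k) with hh
    have key : SD A (B + D) j = ∑ k ∈ Finset.range (n + 1), h k := by
      rw [SD, if_neg (not_lt.mpr hj), genS_add]
      have : genS B * genS D * PowerSeries.invOfUnit (genS A) 1 = genS D * F := by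
        rw [hF]; ring
      rw [this, PowerSeries.coeff_mul, Finset.Nat.sum_antidiagonal_eq_sum_range_succ_mk]
      apply Finset.sum_congr rfl
      intro k hk
      simp only [Finset.mem_range] at hk
      have hk' : (k : ℤ) ≤ j := by omega
      rw [hh]
      simp only
      rw [SD, if_neg (by omega)]
      have htn : (j - (k:ℤ)).toNat = n - k := by omega
      rw [htn]
    rw [key]
    have h1 : ∑ k ∈ Finset.range (n + 1), h k = ∑ k ∈ Finset.range (m + (n+1)), h k := by
      apply Finset.sum_subset (Finset.range_subset_range.mpr (by omega))
      intro k _ hk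
      simp only [Finset.mem_range, not_lt] at hk
      rw [hh]; simp only
      rw [SD, if_pos (by omega), mul_zero]
    have h2 : ∑ k ∈ Finset.range m, h k = ∑ k ∈ Finset.range (m + (n+1)), h k := by
      apply Finset.sum_subset (Finset.range_subset_range.mpr (by omega))
      intro k _ hk
      simp only [Finset.mem_range, not_lt] at hk
      rw [hh]; simp only
      rw [genS_coeff_eq_zero D (show Multiset.card D < k by omega), zero_mul]
    rw [h1, ← h2]

end Aux

/-- Transformation Lemma for multi-Schur functions: if `D^0, …, D^{s-1}` are alphabets
with `card(D^i) ≤ i`, then the multi-Schur determinant `|S_{i_q+q−p}(A^q − B^q)|`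
equals `|S_{i_q+q−p}(A^q − B^q − D^{s−p})|` (rows indexed by `p`, columns by `q`;
in 0-indexed form row `p` uses `D^{s-1-p}`). -/

theorem transformation_lemma {R : Type*} [CommRing R] {s : ℕ}
    (A B D : Fin s → Multiset R) (hD : ∀ p : Fin s, Multiset.card (D p) ≤ (p : ℕ))
    (I : Fin s → ℕ) (hI : Monotone I) :
    Matrix.det (Matrix.of fun p q : Fin s =>
        SD (A q) (B q) ((I q : ℤ) + (q : ℤ) - (p : ℤ)))
      = Matrix.det (Matrix.of fun p q : Fin s =>
        SD (A q) (B q + D p.rev) ((I q : ℤ) + (q : ℤ) - (p : ℤ))) := by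
  classical
  set M : Matrix (Fin s) (Fin s) R :=
    Matrix.of fun p q : Fin s => SD (A q) (B q) ((I q : ℤ) + (q : ℤ) - (p : ℤ)) with hM
  set L : Matrix (Fin s) (Fin s) R :=
    Matrix.of fun p r : Fin s =>
      if (p : ℕ) ≤ (r : ℕ) then
        PowerSeries.coeff ((r : ℕ) - (p : ℕ)) (genS (D p.rev)) else 0 with hLdef
  have hcard : ∀ p : Fin s, Multiset.card (D p.rev) < s - (p : ℕ) := by
    intro p
    have := hD p.rev
    have hr : (p.rev : ℕ) = s - 1 - (p : ℕ) := by
      rw [Fin.val_rev]; omega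
    omega
  have hLM : (Matrix.of fun p q : Fin s =>
      SD (A q) (B q + D p.rev) ((I q : ℤ) + (q : ℤ) - (p : ℤ))) = L * M := by
    ext p q
    rw [Matrix.mul_apply]
    rw [Matrix.of_apply, SD_add _ _ _ _ (hcard p)]
    set f : ℕ → R := fun i =>
      (if (p : ℕ) ≤ i then PowerSeries.coeff (i - (p : ℕ)) (genS (D p.rev)) else 0) *
        SD (A q) (B q) ((I q : ℤ) + (q : ℤ) - (i : ℤ)) with hf
    have hsum : ∑ r : Fin s, L p r * M r q = ∑ i ∈ Finset.range s, f i := by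
      rw [← Fin.sum_univ_eq_sum_range]
      apply Finset.sum_congr rfl
      intro r _
      rfl
    rw [hsum]
    have hsub : ∑ i ∈ Finset.range s, f i = ∑ i ∈ Finset.Ico (p : ℕ) s, f i := by
      symm
      apply Finset.sum_subset
      · intro i hi
        simp only [Finset.mem_Ico] at hi
        exact Finset.mem_range.mpr hi.2
      · intro i hi hni
        simp only [Finset.mem_range] at hi
        simp only [Finset.mem_Ico, not_and, not_le] at hni
        rw [hf]
        simp only
        rw [if_neg (by omega), zero_mul]
    rw [hsub, Finset.sum_Ico_eq_sum_range]
    apply Finset.sum_congr rfl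
    intro k _
    rw [hf]
    simp only
    rw [if_pos (by omega)]
    have e1 : (p : ℕ) + k - (p : ℕ) = k := by omega
    have e2 : ((I q : ℤ) + (q : ℤ) - (p : ℤ)) - (k : ℤ)
        = (I q : ℤ) + (q : ℤ) - (((p : ℕ) + k : ℕ) : ℤ) := by push_cast; ring
    rw [e1, e2]
  rw [hLM, Matrix.det_mul]
  have hL1 : L.det = 1 := by
    rw [Matrix.det_of_upperTriangular]
    · apply Finset.prod_eq_one
      intro p _
      rw [hLdef]
      simp only [Matrix.of_apply, le_refl, if_pos, Nat.sub_self]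
      exact genS_coeff_zero_s8 _
    · intro i j hij
      rw [hLdef]
      simp only [Matrix.of_apply]
      rw [if_neg]
      exact not_le.mpr (by exact_mod_cast hij)
  rw [hL1, one_mul]


end
end

section
/- Pascal staircase specialization: let P = P_{1/(1−zy)} be the Pascal staircase with first column v_s = y^{s−1}, and define W(d, A) = Σ_{i,j} p_{d+1−i, j+1} S_i(−A) S_{j, d−i−j}(x_1 + x_2) for the alphabet A = {x_1 + x_2} of cardinality one. Then W(0) = 1 and for d ≥ 1, W(d, {x_1+x_2}) = (y−1) y^{d−1} S_d(x_1 + x_2). -/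
open scoped Classical

noncomputable section

/-- The Pascal staircase `[p_{s,t}]` (1-indexed) with first column `p_{s,1} = v s`,
zero pattern `p_{s,t} = 0` for `2(t−1) > s−1`, and recursion
`p_{s+1,t} = p_{s,t−1} + p_{s,t}`. -/
def pstair {R : Type*} [CommRing R] (v : ℕ → R) : ℕ → ℕ → R
  | 0, _ => 0
  | _ + 1, 0 => 0
  | s + 1, 1 => v (s + 1)
  | s + 1, t + 2 =>
    if 2 * (t + 1) > s then 0 else pstair v s (t + 1) + pstair v s (t + 2)

/-- `W(d, A) = Σ_{i,j} p_{d+1−i, j+1} · S_i(−A) · S_{(j, d−i−j)}(x_1, x_2)`. -/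
def Wfun {R : Type*} [CommRing R] (v : ℕ → R) (x1 x2 : R) (A : Multiset R) (d : ℕ) : R :=
  ∑ i ∈ Finset.range (d + 1), ∑ j ∈ Finset.range (d + 1),
    pstair v (d + 1 - i) (j + 1) * SD 0 A (i : ℤ)
      * SchurD ({x1, x2} : Multiset R) 0 (![j, d - i - j] : Fin 2 → ℕ)

namespace PSaux

open PowerSeries

variable {R : Type*} [CommRing R]

lemma genS_zero : genS (0 : Multiset R) = 1 := by simp [genS]

lemma genS_singleton (a : R) :
    genS ({a} : Multiset R) = 1 - PowerSeries.C a * PowerSeries.X := by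
  simp [genS]

lemma invOfUnit_one : PowerSeries.invOfUnit (1 : PowerSeries R) 1 = 1 := by
  have h := PowerSeries.mul_invOfUnit (1 : PowerSeries R) 1 (by simp)
  simpa using h

lemma SD_neg {A B : Multiset R} {j : ℤ} (h : j < 0) : SD A B j = 0 := if_pos h

lemma SD_zero_singleton (a : R) (i : ℕ) :
    SD 0 ({a} : Multiset R) (i : ℤ) =
      if i = 0 then 1 else if i = 1 then -a else 0 := by
  rw [SD, if_neg (by exact_mod_cast Int.not_lt.mpr (Int.natCast_nonneg i)), genS_zero,
    invOfUnit_one, mul_one, genS_singleton]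
  simp only [Int.toNat_natCast, map_sub, PowerSeries.coeff_one, PowerSeries.coeff_C_mul,
    PowerSeries.coeff_X]
  rcases i with _ | _ | i <;> simp

variable (a b : R)

lemma genS_pair : genS ({a, b} : Multiset R) =
    1 - C (a + b) * X + C (a * b) * (X * X) := by
  show (Multiset.map _ (a ::ₘ {b})).prod = _
  simp only [Multiset.map_cons, Multiset.prod_cons, Multiset.map_singleton,
    Multiset.prod_singleton, map_add, map_mul]
  ring

lemma const_genS_pair : constantCoeff (genS ({a, b} : Multiset R)) = 1 := by
  rw [genS_pair]; simp

lemma SD_pair_nat (n : ℕ) :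
    SD ({a, b} : Multiset R) 0 (n : ℤ) =
      coeff n (invOfUnit (genS ({a, b} : Multiset R)) 1) := by
  rw [SD, if_neg (by exact_mod_cast Int.not_lt.mpr (Int.natCast_nonneg n)), genS_zero,
    one_mul, Int.toNat_natCast]

lemma hGF : genS ({a, b} : Multiset R) * invOfUnit (genS ({a, b} : Multiset R)) 1 = 1 :=
  PowerSeries.mul_invOfUnit _ 1 (by rw [const_genS_pair]; rfl)

lemma SD_pair_zero : SD ({a, b} : Multiset R) 0 (0 : ℤ) = 1 := by
  have h := congrArg (coeff 0) (hGF a b)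
  rw [show ((0:ℤ)) = ((0:ℕ):ℤ) by rfl, SD_pair_nat]
  rw [genS_pair] at h
  simpa using h

lemma expandGF :
    genS ({a, b} : Multiset R) * invOfUnit (genS ({a, b} : Multiset R)) 1 =
      invOfUnit (genS ({a, b} : Multiset R)) 1
        - C (a + b) * (X * invOfUnit (genS ({a, b} : Multiset R)) 1)
        + C (a * b) * (X * (X * invOfUnit (genS ({a, b} : Multiset R)) 1)) := by
  rw [genS_pair]; ring

lemma coeff_F_zero : coeff 0 (invOfUnit (genS ({a, b} : Multiset R)) 1) = 1 := by
  have h := congrArg (coeff 0) (hGF a b)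
  rw [genS_pair] at h; simpa using h

lemma SD_pair_one : SD ({a, b} : Multiset R) 0 (1 : ℤ) = a + b := by
  have h := congrArg (coeff 1) ((expandGF a b).symm.trans (hGF a b))
  rw [map_add, map_sub, coeff_C_mul, coeff_C_mul, coeff_one,
    show (1:ℕ) = 0 + 1 from rfl, coeff_succ_X_mul, coeff_F_zero] at h
  rw [show (1:ℕ) = 0 + 1 from rfl, coeff_succ_X_mul, coeff_zero_X_mul] at h
  rw [show ((1:ℤ)) = ((1:ℕ):ℤ) by rfl, SD_pair_nat]
  norm_num at h
  linear_combination h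

lemma SD_pair_rec (n : ℕ) :
    SD ({a, b} : Multiset R) 0 ((n : ℤ) + 2) =
      (a + b) * SD ({a, b} : Multiset R) 0 ((n : ℤ) + 1)
        - a * b * SD ({a, b} : Multiset R) 0 (n : ℤ) := by
  have h := congrArg (coeff (n + 2)) ((expandGF a b).symm.trans (hGF a b))
  rw [map_add, map_sub, coeff_C_mul, coeff_C_mul, coeff_one,
    show n + 2 = (n + 1) + 1 from rfl, coeff_succ_X_mul, coeff_succ_X_mul,
    coeff_succ_X_mul] at h
  rw [show ((n:ℤ) + 2) = (((n+2):ℕ):ℤ) by push_cast; ring, SD_pair_nat,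
    show ((n:ℤ) + 1) = (((n+1):ℕ):ℤ) by push_cast; ring, SD_pair_nat, SD_pair_nat]
  simp only [show n+1+1 = n+2 from rfl] at h
  norm_num at h
  linear_combination h

lemma SD_pair_mul (n : ℕ) :
    (a + b) * SD ({a, b} : Multiset R) 0 (n : ℤ) =
      SD ({a, b} : Multiset R) 0 ((n : ℤ) + 1)
        + a * b * SD ({a, b} : Multiset R) 0 ((n : ℤ) - 1) := by
  rcases n with _ | m
  · simp only [Nat.cast_zero, zero_add, zero_sub]
    rw [SD_pair_zero, SD_pair_one, SD_neg (by norm_num)]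
    ring
  · have h := SD_pair_rec a b m
    have e1 : ((m:ℤ) + 1 : ℤ) = ((m+1 : ℕ) : ℤ) := by push_cast; ring
    have e2 : ((m:ℤ) + 2 : ℤ) = (((m+1) : ℕ) : ℤ) + 1 := by push_cast; ring
    have e3 : (((m+1):ℕ):ℤ) - 1 = (m : ℤ) := by push_cast; ring
    rw [e2, e1] at h
    rw [e3, h]
    ring

/-- `T j m = H j H m − H (m+1) H (j−1)`. -/
def T (j m : ℤ) : R := SD ({a, b} : Multiset R) 0 j * SD ({a, b} : Multiset R) 0 m
  - SD ({a, b} : Multiset R) 0 (m + 1) * SD ({a, b} : Multiset R) 0 (j - 1)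

lemma pieri (j m : ℕ) :
    (a + b) * T a b (j : ℤ) (m : ℤ)
      = T a b (j : ℤ) ((m : ℤ) + 1) + T a b ((j : ℤ) + 1) (m : ℤ) := by
  have hj := SD_pair_mul a b j
  have hm := SD_pair_mul a b (m + 1)
  push_cast at hm
  simp only [T]
  rw [show (m:ℤ) + 1 + 1 = (m:ℤ) + 2 by ring] at *
  rw [show (m:ℤ) + 1 - 1 = (m:ℤ) by ring] at hm
  rw [show (j:ℤ) + 1 - 1 = (j:ℤ) by ring]
  linear_combination SD ({a, b} : Multiset R) 0 (m:ℤ) * hj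
    - SD ({a, b} : Multiset R) 0 ((j:ℤ) - 1) * hm

lemma T_diag (j : ℤ) : T a b j (j - 1) = 0 := by
  simp only [T, sub_add_cancel]; ring

lemma schur_eq (j m : ℕ) :
    SchurD ({a, b} : Multiset R) 0 (![j, m] : Fin 2 → ℕ) = T a b (j : ℤ) (m : ℤ) := by
  rw [SchurD, Matrix.det_fin_two]
  simp only [Matrix.of_apply, Matrix.cons_val_zero, Matrix.cons_val_one, Matrix.head_cons,
    Fin.isValue, Fin.val_zero, Fin.val_one, Nat.cast_zero, Nat.cast_one]
  rw [T]
  norm_num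

variable (v : ℕ → R)

lemma pstair_zero_col (s : ℕ) : pstair v s 0 = 0 := by cases s <;> rfl

lemma pstair_one (s : ℕ) : pstair v (s + 1) 1 = v (s + 1) := rfl

lemma pstair_boundary {s t : ℕ} (h : 2 * (t + 1) > s) : pstair v (s + 1) (t + 2) = 0 := by
  rw [pstair, if_pos h]

lemma pstair_rec {s t : ℕ} (h : ¬ 2 * (t + 1) > s) :
    pstair v (s + 1) (t + 2) = pstair v s (t + 1) + pstair v s (t + 2) := by
  rw [pstair, if_neg h]

theorem main (x1 x2 y : R) :
    Wfun (fun s => y ^ (s - 1)) x1 x2 ({x1 + x2} : Multiset R) 0 = 1 ∧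
      ∀ d : ℕ, 1 ≤ d →
        Wfun (fun s => y ^ (s - 1)) x1 x2 ({x1 + x2} : Multiset R) d
          = (y - 1) * y ^ (d - 1) * SD ({x1, x2} : Multiset R) 0 (d : ℤ) := by
  set v : ℕ → R := fun s => y ^ (s - 1) with hv
  constructor
  · rw [Wfun]
    simp only [zero_add, Finset.sum_range_one]
    rw [schur_eq, SD_zero_singleton]
    rw [show pstair v (0 + 1 - 0) (0 + 1) = v 1 from rfl]
    simp only [Nat.cast_zero, T, zero_sub, if_pos rfl]
    rw [SD_pair_zero, SD_neg (by norm_num : (-1 : ℤ) < 0)]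
    simp only [hv]
    norm_num [SD_pair_zero x1 x2]
    exact SD_pair_zero x1 x2
  · intro d hd
    obtain ⟨e, rfl⟩ : ∃ e, d = e + 1 := ⟨d - 1, by omega⟩
    -- Step 1: only i = 0, 1 contribute
    have hW : Wfun v x1 x2 ({x1 + x2} : Multiset R) (e + 1) =
        (∑ j ∈ Finset.range (e + 2),
            pstair v (e + 2) (j + 1) * T x1 x2 (j : ℤ) ((e + 1 - j : ℕ) : ℤ))
          + ∑ j ∈ Finset.range (e + 2),
            pstair v (e + 1) (j + 1) * (-((x1 + x2) * T x1 x2 (j : ℤ) ((e - j : ℕ) : ℤ))) := by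
      rw [Wfun]
      rw [← Finset.sum_subset (show ({0, 1} : Finset ℕ) ⊆ Finset.range (e + 1 + 1) by
            intro i hi
            fin_cases hi <;> simp <;> omega)
          (by
            intro i _ hi2
            apply Finset.sum_eq_zero
            intro j _
            rw [SD_zero_singleton]
            simp only [Finset.mem_insert, Finset.mem_singleton, not_or] at hi2
            rw [if_neg hi2.1, if_neg hi2.2]
            ring)]
      rw [Finset.sum_insert (by simp), Finset.sum_singleton]
      congr 1
      · apply Finset.sum_congr rfl
        intro j _
        rw [schur_eq, SD_zero_singleton]
        simp only [if_pos rfl]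
        norm_num
      · apply Finset.sum_congr rfl
        intro j _
        rw [schur_eq, SD_zero_singleton]
        norm_num
        ring
    -- Step 2: apply Pieri to the second sum
    have hP : ∀ j ∈ Finset.range (e + 2),
        pstair v (e + 1) (j + 1) * (-((x1 + x2) * T x1 x2 (j : ℤ) ((e - j : ℕ) : ℤ)))
          = -(pstair v (e + 1) (j + 1) * T x1 x2 (j : ℤ) ((e + 1 - j : ℕ) : ℤ))
            - pstair v (e + 1) (j + 1) * T x1 x2 ((j : ℤ) + 1) ((e - j : ℕ) : ℤ) := by
      intro j hj
      rcases Nat.lt_or_ge j (e + 1) with hjd | hjd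
      · have hcast : ((e - j : ℕ) : ℤ) + 1 = ((e + 1 - j : ℕ) : ℤ) := by omega
        have := pieri x1 x2 j (e - j)
        rw [hcast] at this
        rw [this]
        ring
      · have hj2 : j = e + 1 := by
          simp only [Finset.mem_range] at hj; omega
        subst hj2
        rw [show e + 1 + 1 = e + 2 from rfl,
          pstair_boundary v (show 2 * (e + 1) > e by omega)]
        ring
    rw [Finset.sum_congr rfl hP] at hW
    -- Step 3: reindex
    have hre : (∑ j ∈ Finset.range (e + 2),
          pstair v (e + 1) (j + 1) * T x1 x2 ((j : ℤ) + 1) ((e - j : ℕ) : ℤ))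
        = ∑ j ∈ Finset.range (e + 2),
            pstair v (e + 1) j * T x1 x2 (j : ℤ) ((e + 1 - j : ℕ) : ℤ) := by
      have hF : ∀ j : ℕ, pstair v (e + 1) (j + 1) * T x1 x2 ((j : ℤ) + 1) ((e - j : ℕ) : ℤ)
          = pstair v (e + 1) (j + 1) * T x1 x2 ((j + 1 : ℕ) : ℤ) ((e + 1 - (j + 1) : ℕ) : ℤ) := by
        intro j
        have h1 : ((j : ℤ) + 1) = ((j + 1 : ℕ) : ℤ) := by push_cast; ring
        have h2 : ((e - j : ℕ) : ℤ) = ((e + 1 - (j + 1) : ℕ) : ℤ) := by omega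
        rw [h1, h2]
      rw [Finset.sum_congr rfl fun j _ => hF j]
      have h1 := Finset.sum_range_succ' (fun k => pstair v (e + 1) k
        * T x1 x2 (k : ℤ) ((e + 1 - k : ℕ) : ℤ)) (e + 2)
      have h2 := Finset.sum_range_succ (fun k => pstair v (e + 1) k
        * T x1 x2 (k : ℤ) ((e + 1 - k : ℕ) : ℤ)) (e + 2)
      have hz0 : pstair v (e + 1) 0
          * T x1 x2 ((0 : ℕ) : ℤ) ((e + 1 - 0 : ℕ) : ℤ) = 0 := by
        rw [pstair_zero_col]; ring
      have hz1 : pstair v (e + 1) (e + 2)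
          * T x1 x2 ((e + 2 : ℕ) : ℤ) ((e + 1 - (e + 2) : ℕ) : ℤ) = 0 := by
        rw [show e + 2 = e + 1 + 1 from rfl,
          pstair_boundary v (show 2 * (e + 1) > e by omega)]
        ring
      linear_combination h2 - h1 + hz1 - hz0
    -- Step 4: combine into a single sum
    have hcomb : Wfun v x1 x2 ({x1 + x2} : Multiset R) (e + 1) =
        ∑ j ∈ Finset.range (e + 2),
          (pstair v (e + 2) (j + 1) - pstair v (e + 1) (j + 1) - pstair v (e + 1) j)
            * T x1 x2 (j : ℤ) ((e + 1 - j : ℕ) : ℤ) := by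
      rw [hW, Finset.sum_sub_distrib, Finset.sum_neg_distrib, hre]
      rw [show ∀ (X Y Z : R), X + (-Y - Z) = X - Y - Z from by intros; ring]
      rw [← Finset.sum_sub_distrib, ← Finset.sum_sub_distrib]
      apply Finset.sum_congr rfl
      intro j _
      ring
    rw [hcomb]
    -- Step 5: the sum collapses to the j = 0 term
    rw [Finset.sum_eq_single_of_mem 0 (by simp)
      (by
        intro j _ hj0
        obtain ⟨t, rfl⟩ : ∃ t, j = t + 1 := ⟨j - 1, by omega⟩
        by_cases hb : 2 * (t + 1) > e + 1
        · rw [show t + 1 + 1 = t + 2 from rfl,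
            show e + 2 = e + 1 + 1 from rfl,
            pstair_boundary v hb,
            pstair_boundary v (show 2 * (t + 1) > e by omega)]
          rcases Nat.lt_or_ge (e + 2) (2 * (t + 1)) with hb2 | hb2
          · -- 2(t+1) > e+2 : the remaining pstair term is also 0
            obtain ⟨u, rfl⟩ : ∃ u, t = u + 1 := ⟨t - 1, by omega⟩
            rw [show u + 1 + 1 = u + 2 from rfl,
              pstair_boundary v (show 2 * (u + 1) > e by omega)]
            ring
          · -- 2(t+1) = e+2 : the T factor vanishes
            have he : e + 1 - (t + 1) = t := by omega
            have hc : ((t : ℕ) : ℤ) = ((t + 1 : ℕ) : ℤ) - 1 := by push_cast; ring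
            rw [he, hc, T_diag]
            ring
        · rw [show t + 1 + 1 = t + 2 from rfl, show e + 2 = e + 1 + 1 from rfl,
            pstair_rec v hb]
          ring)]
    -- Step 6: evaluate the j = 0 term
    rw [pstair_zero_col]
    rw [show pstair v (e + 2) (0 + 1) = v (e + 2) from rfl,
      show pstair v (e + 1) (0 + 1) = v (e + 1) from rfl]
    simp only [hv, Nat.cast_zero, Nat.add_sub_cancel, Nat.sub_zero]
    rw [T, SD_pair_zero, SD_neg (by norm_num : (0 : ℤ) - 1 < 0)]
    rw [show e + 2 - 1 = e + 1 from rfl, pow_succ]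
    push_cast
    ring

end PSaux

/-- Pascal staircase specialization: for the Pascal staircase `P_{1/(1−zy)}` with first
column `v_s = y^{s−1}` and the one-element alphabet `A = {x_1 + x_2}`, one has
`W(0) = 1` and `W(d, {x_1+x_2}) = (y−1) y^{d−1} S_d(x_1 + x_2)` for `d ≥ 1`,
where `x_1, x_2, y` are indeterminates and `S_d(x_1+x_2)` is the complete homogeneous
symmetric polynomial of degree `d` in `x_1, x_2`. -/
theorem pascal_staircase_specialization :
    letI R := MvPolynomial (Fin 3) ℤ
    letI x1 : R := MvPolynomial.X 0
    letI x2 : R := MvPolynomial.X 1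
    letI y : R := MvPolynomial.X 2
    Wfun (fun s => y ^ (s - 1)) x1 x2 ({x1 + x2} : Multiset R) 0 = 1 ∧
      ∀ d : ℕ, 1 ≤ d →
        Wfun (fun s => y ^ (s - 1)) x1 x2 ({x1 + x2} : Multiset R) d
          = (y - 1) * y ^ (d - 1) * SD ({x1, x2} : Multiset R) 0 (d : ℤ) := by
  exact PSaux.main _ _ _

end
end

section
/- Pascal staircase with extra alphabet: with P = P_{1/(1−zy)} and any alphabet B, for d large enough W(d, {x_1+x_2} + B) = (y−1) y^{d−1} S_d(X_2 − y^{−1}B), where X_2 = {x_1, x_2} and y^{−1}B = {b/y : b ∈ B}. -/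
open scoped Classical

noncomputable section

section AuxLemmas
open PowerSeries
variable {R : Type*} [CommRing R]

lemma genS_zero : genS (0 : Multiset R) = 1 := by simp [genS]

lemma genS_cons (a : R) (A : Multiset R) :
    genS (a ::ₘ A) = (1 - PowerSeries.C a * PowerSeries.X) * genS A := by
  simp [genS]

lemma genS_const (A : Multiset R) : constantCoeff (genS A) = 1 := by
  induction A using Multiset.induction_on with
  | empty => simp [genS_zero]
  | cons a A ih => simp [genS_cons, ih]

lemma genS_mul_inv (A : Multiset R) : genS A * PowerSeries.invOfUnit (genS A) 1 = 1 :=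
  PowerSeries.mul_invOfUnit _ 1 (by simpa using genS_const A)

lemma invOfUnit_one : PowerSeries.invOfUnit (1 : PowerSeries R) 1 = 1 := by
  have h := PowerSeries.mul_invOfUnit (1 : PowerSeries R) 1 (by simp)
  simpa using h

lemma SD_nat (A B : Multiset R) (n : ℕ) :
    SD A B (n : ℤ) = PowerSeries.coeff n (genS B * PowerSeries.invOfUnit (genS A) 1) := by
  simp [SD]

lemma SD_zero_eq (A : Multiset R) (n : ℕ) :
    SD 0 A (n : ℤ) = PowerSeries.coeff n (genS A) := by
  rw [SD_nat, genS_zero, invOfUnit_one, mul_one]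

/-- The complete functions `h_k(x1, x2)` (as `S_k(X_2)`), indexed by `ℤ`. -/
def hh (x1 x2 : R) (k : ℤ) : R := SD ({x1, x2} : Multiset R) 0 k

variable (x1 x2 : R)

lemma genS_pair : genS ({x1, x2} : Multiset R)
    = 1 - PowerSeries.C (x1 + x2) * X + PowerSeries.C (x1 * x2) * X ^ 2 := by
  show genS (x1 ::ₘ {x2}) = _
  rw [genS_cons]
  simp only [genS, Multiset.map_singleton, Multiset.prod_singleton, map_add, map_mul]
  ring

lemma hh_neg {k : ℤ} (h : k < 0) : hh x1 x2 k = 0 := by simp [hh, SD, h]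

lemma hh_nat (n : ℕ) :
    hh x1 x2 (n : ℤ) = coeff n (PowerSeries.invOfUnit (genS ({x1, x2} : Multiset R)) 1) := by
  simp [hh, SD, genS_zero]

lemma hh_zero : hh x1 x2 0 = 1 := by
  have h := congrArg (constantCoeff) (genS_mul_inv ({x1, x2} : Multiset R))
  rw [map_mul, genS_const, one_mul, map_one] at h
  have h2 := hh_nat x1 x2 0
  push_cast at h2
  simpa [PowerSeries.coeff_zero_eq_constantCoeff, h] using h2

lemma hh_rec_nat (n : ℕ) :
    hh x1 x2 ((n : ℤ) + 2) = (x1 + x2) * hh x1 x2 ((n : ℤ) + 1) - x1 * x2 * hh x1 x2 (n : ℤ) := by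
  have e1 : ((n : ℤ) + 2) = ((n + 2 : ℕ) : ℤ) := by push_cast; ring
  have e2 : ((n : ℤ) + 1) = ((n + 1 : ℕ) : ℤ) := by push_cast; ring
  rw [e1, e2, hh_nat, hh_nat, hh_nat]
  set H := PowerSeries.invOfUnit (genS ({x1, x2} : Multiset R)) 1 with hH
  have key : genS ({x1, x2} : Multiset R) * H = 1 := genS_mul_inv _
  rw [genS_pair] at key
  have key2 : (H : PowerSeries R) =
      1 + PowerSeries.C (x1 + x2) * (X * H) - PowerSeries.C (x1 * x2) * (X ^ 2 * H) := by
    have : (1 - PowerSeries.C (x1 + x2) * X + PowerSeries.C (x1 * x2) * X ^ 2) * H = 1 := key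
    linear_combination this
  have := congrArg (coeff (n + 2)) key2
  rw [map_sub, map_add, coeff_C_mul, coeff_C_mul, coeff_succ_X_mul] at this
  rw [PowerSeries.coeff_X_pow_mul H 2 n] at this
  simpa [PowerSeries.coeff_one] using this

lemma hh_one : hh x1 x2 1 = x1 + x2 := by
  have e2 : (1 : ℤ) = ((1 : ℕ) : ℤ) := by norm_num
  rw [e2, hh_nat]
  set H := PowerSeries.invOfUnit (genS ({x1, x2} : Multiset R)) 1 with hH
  have key : genS ({x1, x2} : Multiset R) * H = 1 := genS_mul_inv _
  rw [genS_pair] at key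
  have key2 : (H : PowerSeries R) =
      1 + PowerSeries.C (x1 + x2) * (X * H) - PowerSeries.C (x1 * x2) * (X * (X * H)) := by
    have : (1 - PowerSeries.C (x1 + x2) * X + PowerSeries.C (x1 * x2) * X ^ 2) * H = 1 := key
    linear_combination this
  have := congrArg (coeff 1) key2
  rw [map_sub, map_add, coeff_C_mul, coeff_C_mul] at this
  rw [show (1:ℕ) = 0 + 1 from rfl] at this
  rw [coeff_succ_X_mul, coeff_succ_X_mul] at this
  have h0 : coeff 0 (X * H) = 0 := by
    rw [PowerSeries.coeff_zero_eq_constantCoeff, map_mul]; simp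
  have hz : coeff 0 H = 1 := by
    have h2 := hh_nat x1 x2 0
    push_cast at h2
    rw [hH, ← h2, hh_zero]
  simpa [PowerSeries.coeff_one, h0, hz] using this

lemma hh_rec {k : ℤ} (h : 1 ≤ k) :
    hh x1 x2 k = (x1 + x2) * hh x1 x2 (k - 1) - x1 * x2 * hh x1 x2 (k - 2) := by
  lift k to ℕ using (by omega)
  match k, h with
  | 1, _ => push_cast
            rw [hh_zero, hh_one, hh_neg x1 x2 (by norm_num : (-1:ℤ) < 0)]; ring
  | (n+2), _ =>
      have := hh_rec_nat x1 x2 n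
      have e1 : (((n:ℕ)+2:ℕ):ℤ) = (n:ℤ) + 2 := by push_cast; ring
      rw [e1, show (n:ℤ) + 2 - 1 = (n:ℤ) + 1 by ring, show (n:ℤ) + 2 - 2 = (n:ℤ) by ring]
      exact this

variable (v : ℕ → R)

lemma pstair_zero {s t : ℕ} (h : s + 1 < 2 * t) : pstair v s t = 0 := by
  match s, t with
  | 0, t => cases t with
    | zero => rfl
    | succ t => cases t with
      | zero => rfl
      | succ t => rfl
  | s + 1, 0 => omega
  | s + 1, 1 => omega
  | s + 1, t + 2 =>
    show (if 2 * (t + 1) > s then 0 else pstair v s (t + 1) + pstair v s (t + 2)) = 0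
    rw [if_pos (by omega)]

lemma pstair_one (s : ℕ) : pstair v (s + 1) 1 = v (s + 1) := rfl

lemma pstair_rec {s t : ℕ} (h : 2 * (t + 1) ≤ s) :
    pstair v (s + 1) (t + 2) = pstair v s (t + 1) + pstair v s (t + 2) := by
  show (if 2 * (t + 1) > s then 0 else pstair v s (t + 1) + pstair v s (t + 2)) = _
  rw [if_neg (by omega)]

lemma schurD_two (a b : ℕ) :
    SchurD ({x1, x2} : Multiset R) 0 ![a, b]
      = hh x1 x2 a * hh x1 x2 b - hh x1 x2 ((b : ℤ) + 1) * hh x1 x2 ((a : ℤ) - 1) := by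
  rw [SchurD, Matrix.det_fin_two]
  simp [hh, Matrix.cons_val_zero, Matrix.cons_val_one]

lemma jt (a : ℕ) : ∀ b : ℤ, (a : ℤ) ≤ b + 1 →
    hh x1 x2 a * hh x1 x2 b - hh x1 x2 (b + 1) * hh x1 x2 ((a : ℤ) - 1)
      = (x1 * x2) ^ a * hh x1 x2 (b - a) := by
  induction a with
  | zero =>
    intro b _
    push_cast
    rw [hh_zero, hh_neg x1 x2 (by norm_num : (-1:ℤ) < 0)]
    ring_nf
  | succ a ih =>
    intro b hb
    have hb' : (a : ℤ) ≤ b := by push_cast at hb ⊢; omega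
    have hb0 : (0 : ℤ) ≤ b := le_trans (by positivity) hb'
    have e1 : ((a + 1 : ℕ) : ℤ) = (a : ℤ) + 1 := by push_cast; ring
    rw [e1]
    rw [hh_rec x1 x2 (by omega : (1:ℤ) ≤ (a:ℤ) + 1)]
    rw [hh_rec x1 x2 (by omega : (1:ℤ) ≤ b + 1)]
    have ihb := ih (b - 1) (by omega)
    rw [show (a:ℤ) + 1 - 1 = (a:ℤ) by ring, show (a:ℤ) + 1 - 2 = (a:ℤ) - 1 by ring,
      show b + 1 - 1 = b by ring, show b + 1 - 2 = b - 1 by ring]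
    have goal : ((x1 + x2) * hh x1 x2 a - x1 * x2 * hh x1 x2 ((a:ℤ) - 1)) * hh x1 x2 b -
        ((x1 + x2) * hh x1 x2 b - x1 * x2 * hh x1 x2 (b - 1)) * hh x1 x2 a
        = x1 * x2 * (hh x1 x2 a * hh x1 x2 (b - 1) - hh x1 x2 (b - 1 + 1) * hh x1 x2 ((a:ℤ) - 1)) := by
      rw [show b - 1 + 1 = b by ring]; ring
    rw [goal, ihb, show b - 1 - a = b - ((a:ℤ)+1) by ring]
    ring

/-- `G(m) = Σ_j p_{m+1,j+1} e^j h_{m-2j}` -/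
def GG (v : ℕ → R) (x1 x2 : R) (m : ℕ) : R :=
  ∑ j ∈ Finset.range (m + 1),
    pstair v (m + 1) (j + 1) * (x1 * x2) ^ j * hh x1 x2 ((m : ℤ) - 2 * j)

lemma TP (m j : ℕ) :
    pstair v (m + 1) (j + 2) * hh x1 x2 ((m : ℤ) - 2 * j - 2)
      = (pstair v m (j + 1) + pstair v m (j + 2)) * hh x1 x2 ((m : ℤ) - 2 * j - 2) := by
  by_cases h : 2 * (j + 1) ≤ m
  · rw [pstair_rec v h]
  · have hz1 : pstair v (m + 1) (j + 2) = 0 := pstair_zero v (by omega)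
    have hz2 : pstair v m (j + 2) = 0 := pstair_zero v (by omega)
    by_cases h2 : m ≤ 2 * j
    · have hz3 : pstair v m (j + 1) = 0 := pstair_zero v (by omega)
      rw [hz1, hz2, hz3]; ring
    · have hm : m = 2 * j + 1 := by omega
      have : hh x1 x2 ((m : ℤ) - 2 * j - 2) = 0 := by
        apply hh_neg; subst hm; push_cast; omega
      rw [this]; ring

lemma TH (m j : ℕ) :
    pstair v (m + 1) (j + 1) * hh x1 x2 ((m : ℤ) + 1 - 2 * j)
      = pstair v (m + 1) (j + 1) *
          ((x1 + x2) * hh x1 x2 ((m : ℤ) - 2 * j) - x1 * x2 * hh x1 x2 ((m : ℤ) - 1 - 2 * j)) := by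
  by_cases h : 2 * j ≤ m
  · have := hh_rec x1 x2 (k := (m : ℤ) + 1 - 2 * j) (by push_cast; omega)
    rw [show (m : ℤ) + 1 - 2 * j - 1 = (m : ℤ) - 2 * j by ring,
      show (m : ℤ) + 1 - 2 * j - 2 = (m : ℤ) - 1 - 2 * j by ring] at this
    rw [this]
  · by_cases h2 : m + 1 = 2 * j
    · have hz : pstair v (m + 1) (j + 1) = 0 := pstair_zero v (by omega)
      rw [hz]; ring
    · have n1 : hh x1 x2 ((m : ℤ) + 1 - 2 * j) = 0 := hh_neg x1 x2 (by push_cast; omega)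
      have n2 : hh x1 x2 ((m : ℤ) - 2 * j) = 0 := hh_neg x1 x2 (by push_cast; omega)
      have n3 : hh x1 x2 ((m : ℤ) - 1 - 2 * j) = 0 := hh_neg x1 x2 (by push_cast; omega)
      rw [n1, n2, n3]; ring

lemma B0 (m : ℕ) :
    GG v x1 x2 (m + 1)
      = (x1 + x2) * GG v x1 x2 m + (v (m + 2) - v (m + 1)) * hh x1 x2 ((m : ℤ) + 1) := by
  classical
  set e := x1 * x2 with he
  set s := x1 + x2 with hs
  set SA : R := ∑ j ∈ Finset.range (m + 1),
    pstair v (m + 1) (j + 1) * e ^ (j + 1) * hh x1 x2 ((m : ℤ) - 1 - 2 * j) with hSA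
  set SB : R := ∑ j ∈ Finset.range (m + 1),
    pstair v (m + 1) (j + 2) * e ^ (j + 1) * hh x1 x2 ((m : ℤ) - 1 - 2 * j) with hSB
  have step1 : GG v x1 x2 (m + 1) = v (m + 2) * hh x1 x2 ((m : ℤ) + 1) + SA + SB := by
    rw [GG, Finset.sum_range_succ']
    have t0 : pstair v (m + 1 + 1) (0 + 1) * e ^ 0 * hh x1 x2 ((↑(m + 1) : ℤ) - 2 * (0:ℕ))
        = v (m + 2) * hh x1 x2 ((m : ℤ) + 1) := by
      rw [pstair_one v (m + 1)]
      push_cast; ring_nf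
    rw [t0]
    have tj : ∀ j ∈ Finset.range (m + 1),
        pstair v (m + 1 + 1) (j + 1 + 1) * e ^ (j + 1) * hh x1 x2 ((↑(m + 1) : ℤ) - 2 * (↑(j + 1)))
          = pstair v (m + 1) (j + 1) * e ^ (j + 1) * hh x1 x2 ((m : ℤ) - 1 - 2 * j)
            + pstair v (m + 1) (j + 2) * e ^ (j + 1) * hh x1 x2 ((m : ℤ) - 1 - 2 * j) := by
      intro j _
      have ecast : ((↑(m + 1) : ℤ) - 2 * (↑(j + 1))) = (↑(m+1) : ℤ) - 2 * j - 2 := by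
        push_cast; ring
      rw [ecast]
      have := TP x1 x2 v (m + 1) j
      calc pstair v (m + 1 + 1) (j + 1 + 1) * e ^ (j + 1) * hh x1 x2 ((↑(m+1) : ℤ) - 2 * j - 2)
          = pstair v (m + 1 + 1) (j + 2) * hh x1 x2 ((↑(m+1) : ℤ) - 2 * j - 2) * e ^ (j + 1) := by
            ring
        _ = (pstair v (m + 1) (j + 1) + pstair v (m + 1) (j + 2)) *
              hh x1 x2 ((↑(m+1) : ℤ) - 2 * j - 2) * e ^ (j + 1) := by rw [this]
        _ = _ := by
            have ecast2 : ((↑(m+1) : ℤ) - 2 * j - 2) = (m : ℤ) - 1 - 2 * j := by push_cast; ring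
            rw [ecast2]; ring
    rw [Finset.sum_congr rfl tj, Finset.sum_add_distrib]
    ring
  set K : R := ∑ j ∈ Finset.range (m + 2),
    pstair v (m + 1) (j + 1) * e ^ j * hh x1 x2 ((m : ℤ) + 1 - 2 * j) with hK
  have step2 : K = SB + v (m + 1) * hh x1 x2 ((m : ℤ) + 1) := by
    rw [hK, Finset.sum_range_succ']
    have t0 : pstair v (m + 1) (0 + 1) * e ^ 0 * hh x1 x2 ((m : ℤ) + 1 - 2 * ((0:ℕ):ℤ))
        = v (m + 1) * hh x1 x2 ((m : ℤ) + 1) := by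
      rw [pstair_one v m]; push_cast; ring_nf
    have tj : ∀ j ∈ Finset.range (m + 1),
        pstair v (m + 1) (j + 1 + 1) * e ^ (j + 1) * hh x1 x2 ((m : ℤ) + 1 - 2 * (↑(j + 1)))
          = pstair v (m + 1) (j + 2) * e ^ (j + 1) * hh x1 x2 ((m : ℤ) - 1 - 2 * j) := by
      intro j _
      have ecast : ((m : ℤ) + 1 - 2 * (↑(j + 1))) = (m : ℤ) - 1 - 2 * j := by push_cast; ring
      rw [ecast]
    rw [Finset.sum_congr rfl tj, t0, ← hSB]
  set K1 : R := ∑ j ∈ Finset.range (m + 2),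
    pstair v (m + 1) (j + 1) * e ^ j * hh x1 x2 ((m : ℤ) - 2 * j) with hK1
  set K2 : R := ∑ j ∈ Finset.range (m + 2),
    pstair v (m + 1) (j + 1) * e ^ j * (e * hh x1 x2 ((m : ℤ) - 1 - 2 * j)) with hK2
  have step3 : K = s * K1 - K2 := by
    rw [hK, hK1, hK2, Finset.mul_sum, ← Finset.sum_sub_distrib]
    apply Finset.sum_congr rfl
    intro j _
    have := TH x1 x2 v m j
    calc pstair v (m + 1) (j + 1) * e ^ j * hh x1 x2 ((m : ℤ) + 1 - 2 * j)
        = pstair v (m + 1) (j + 1) * hh x1 x2 ((m : ℤ) + 1 - 2 * j) * e ^ j := by ring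
      _ = pstair v (m + 1) (j + 1) *
            (s * hh x1 x2 ((m : ℤ) - 2 * j) - e * hh x1 x2 ((m : ℤ) - 1 - 2 * j)) * e ^ j := by
          rw [this]
      _ = _ := by ring
  have ptop : pstair v (m + 1) (m + 1 + 1) = 0 := pstair_zero v (by omega)
  have step4 : K1 = GG v x1 x2 m := by
    rw [hK1, Finset.sum_range_succ, ptop, GG]
    simp [he]
  have step5 : K2 = SA := by
    rw [hK2, hSA, Finset.sum_range_succ, ptop]
    simp only [zero_mul, mul_zero, add_zero]
    apply Finset.sum_congr rfl
    intro j _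
    ring
  linear_combination step1 - step2 + step3 + s * step4 - step5

lemma termSchur (m j : ℕ) :
    pstair v (m + 1) (j + 1) * SchurD ({x1, x2} : Multiset R) 0 ![j, m - j]
      = pstair v (m + 1) (j + 1) * ((x1 * x2) ^ j * hh x1 x2 ((m : ℤ) - 2 * j)) := by
  by_cases h : 2 * j ≤ m
  · have hj : j ≤ m := by omega
    rw [schurD_two]
    have hcast : ((m - j : ℕ) : ℤ) = (m : ℤ) - j := by
      push_cast [hj]; ring
    have hb := jt x1 x2 j ((m : ℤ) - j) (by omega)
    rw [hcast, show (m:ℤ) - j - j = (m:ℤ) - 2*j by ring] at *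
    rw [hb]
  · have hz : pstair v (m + 1) (j + 1) = 0 := pstair_zero v (by omega)
    rw [hz]; ring

lemma Wred (A : Multiset R) (d : ℕ) :
    Wfun v x1 x2 A d
      = ∑ i ∈ Finset.range (d + 1), SD 0 A (i : ℤ) * GG v x1 x2 (d - i) := by
  rw [Wfun]
  apply Finset.sum_congr rfl
  intro i hi
  have hi' : i ≤ d := by
    have := Finset.mem_range.mp hi; omega
  have hd1 : d + 1 - i = (d - i) + 1 := by omega
  rw [hd1]
  have inner : ∀ j ∈ Finset.range (d + 1),
      pstair v ((d - i) + 1) (j + 1) * SD 0 A (i : ℤ)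
          * SchurD ({x1, x2} : Multiset R) 0 ![j, d - i - j]
        = SD 0 A (i : ℤ) *
            (pstair v ((d - i) + 1) (j + 1) * (x1 * x2) ^ j * hh x1 x2 (((d - i : ℕ) : ℤ) - 2 * j)) := by
    intro j _
    have := termSchur x1 x2 v (d - i) j
    calc pstair v ((d - i) + 1) (j + 1) * SD 0 A (i : ℤ)
          * SchurD ({x1, x2} : Multiset R) 0 ![j, d - i - j]
        = pstair v ((d - i) + 1) (j + 1) * SchurD ({x1, x2} : Multiset R) 0 ![j, d - i - j]
            * SD 0 A (i : ℤ) := by ring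
      _ = pstair v ((d - i) + 1) (j + 1) * ((x1 * x2) ^ j * hh x1 x2 (((d - i : ℕ) : ℤ) - 2 * j))
            * SD 0 A (i : ℤ) := by rw [this]
      _ = _ := by ring
  rw [Finset.sum_congr rfl inner, ← Finset.mul_sum]
  congr 1
  rw [GG]
  symm
  apply Finset.sum_subset
  · intro x hx
    rw [Finset.mem_range] at *
    omega
  · intro j _ hj
    rw [Finset.mem_range, not_lt] at hj
    have hz : pstair v ((d - i) + 1) (j + 1) = 0 := pstair_zero v (by omega)
    rw [hz]; ring

lemma coeff_one_sub_C_mul (a : R) (f : PowerSeries R) (n : ℕ) :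
    coeff (n + 1) ((1 - PowerSeries.C a * X) * f)
      = coeff (n + 1) f - a * coeff n f := by
  have : (1 - PowerSeries.C a * X) * f = f - PowerSeries.C a * (X * f) := by ring
  rw [this, map_sub, coeff_C_mul, coeff_succ_X_mul]

lemma coeff_zero_one_sub_C_mul (a : R) (f : PowerSeries R) :
    coeff 0 ((1 - PowerSeries.C a * X) * f) = coeff 0 f := by
  have : (1 - PowerSeries.C a * X) * f = f - PowerSeries.C a * (X * f) := by ring
  rw [this, map_sub, coeff_C_mul]
  have h0 : coeff 0 (X * f) = 0 := by
    rw [PowerSeries.coeff_zero_eq_constantCoeff, map_mul]; simp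
  rw [h0]; ring

lemma SD_cons (A B : Multiset R) (a : R) (n : ℕ) :
    SD A (a ::ₘ B) ((n + 1 : ℕ) : ℤ)
      = SD A B ((n + 1 : ℕ) : ℤ) - a * SD A B (n : ℤ) := by
  rw [SD_nat, SD_nat, SD_nat, genS_cons, mul_assoc]
  exact coeff_one_sub_C_mul a _ n

lemma SD_cons_zero (A B : Multiset R) (a : R) :
    SD A (a ::ₘ B) ((0 : ℕ) : ℤ) = SD A B ((0 : ℕ) : ℤ) := by
  rw [SD_nat, SD_nat, genS_cons, mul_assoc]
  exact coeff_zero_one_sub_C_mul a _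

lemma Wcons (A : Multiset R) (a : R) (d : ℕ) :
    Wfun v x1 x2 (a ::ₘ A) (d + 1)
      = Wfun v x1 x2 A (d + 1) - a * Wfun v x1 x2 A d := by
  have L : ∀ (M : Multiset R),
      (∑ i ∈ Finset.range (d + 1 + 1), SD 0 M (i : ℤ) * GG v x1 x2 (d + 1 - i))
        = (∑ i ∈ Finset.range (d + 1), SD 0 M ((i + 1 : ℕ) : ℤ) * GG v x1 x2 (d - i))
            + SD 0 M ((0 : ℕ) : ℤ) * GG v x1 x2 (d + 1) := by
    intro M
    rw [Finset.sum_range_succ']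
    congr 1
    apply Finset.sum_congr rfl
    intro i hi
    have : d + 1 - (i + 1) = d - i := by omega
    rw [this]
  rw [Wred, Wred, Wred, L, L]
  have tj : ∀ i ∈ Finset.range (d + 1),
      SD 0 (a ::ₘ A) ((i + 1 : ℕ) : ℤ) * GG v x1 x2 (d - i)
        = SD 0 A ((i + 1 : ℕ) : ℤ) * GG v x1 x2 (d - i)
            - a * (SD 0 A (i : ℤ) * GG v x1 x2 (d - i)) := by
    intro i _
    rw [SD_cons]; ring
  rw [Finset.sum_congr rfl tj, Finset.sum_sub_distrib, ← Finset.mul_sum, SD_cons_zero]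
  ring

lemma SD_single (c : R) (i : ℕ) :
    SD 0 ({c} : Multiset R) (i : ℤ)
      = if i = 0 then 1 else if i = 1 then -c else 0 := by
  rw [SD_zero_eq]
  have : genS ({c} : Multiset R) = 1 - PowerSeries.C c * X := by
    show genS (c ::ₘ 0) = _
    rw [genS_cons, genS_zero, mul_one]
  rw [this, map_sub, coeff_C_mul, PowerSeries.coeff_one, PowerSeries.coeff_X]
  rcases i with _ | _ | i <;> simp

lemma baseB0 (y : Rˣ) (m : ℕ) :
    Wfun (fun s => (y : R) ^ (s - 1)) x1 x2 ({x1 + x2} : Multiset R) (m + 1)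
      = ((y : R) - 1) * (y : R) ^ m * hh x1 x2 ((m : ℤ) + 1) := by
  rw [Wred, Finset.sum_range_succ', Finset.sum_range_succ']
  have z2 : ∀ i ∈ Finset.range m,
      SD 0 ({x1 + x2} : Multiset R) ((i + 1 + 1 : ℕ) : ℤ)
          * GG (fun s => (y : R) ^ (s - 1)) x1 x2 (m + 1 - (i + 1 + 1)) = 0 := by
    intro i _
    rw [SD_single]
    simp
  rw [Finset.sum_congr rfl z2, Finset.sum_const_zero]
  rw [SD_single, SD_single]
  norm_num
  have hB := B0 x1 x2 (fun s => (y : R) ^ (s - 1)) m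
  simp only [show m + 2 - 1 = m + 1 by omega, show m + 1 - 1 = m by omega] at hB
  rw [hB, pow_succ]
  ring

end AuxLemmas

/-- Pascal staircase with extra alphabet: with `P = P_{1/(1−zy)}` (first column
`v_s = y^{s−1}`, `y` invertible) and any alphabet `B`, for `d` large enough
`W(d, {x_1+x_2} + B) = (y−1) y^{d−1} S_d(X_2 − y^{−1}B)`, where `X_2 = {x_1,x_2}`
and `y^{−1}B = {b/y : b ∈ B}`. -/
theorem pascal_staircase_extra_alphabet {R : Type*} [CommRing R]
    (x1 x2 : R) (y : Rˣ) (B : Multiset R) :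
    ∃ d₀ : ℕ, ∀ d : ℕ, d₀ ≤ d →
      Wfun (fun s => (y : R) ^ (s - 1)) x1 x2 (({x1 + x2} : Multiset R) + B) d
        = ((y : R) - 1) * (y : R) ^ (d - 1)
          * SD ({x1, x2} : Multiset R) (B.map (fun b => ((y⁻¹ : Rˣ) : R) * b)) (d : ℤ) := by
  suffices H : ∀ (d : ℕ), Multiset.card B + 1 ≤ d →
      Wfun (fun s => (y : R) ^ (s - 1)) x1 x2 (({x1 + x2} : Multiset R) + B) d
        = ((y : R) - 1) * (y : R) ^ (d - 1)
          * SD ({x1, x2} : Multiset R) (B.map (fun b => ((y⁻¹ : Rˣ) : R) * b)) (d : ℤ) by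
    exact ⟨Multiset.card B + 1, H⟩
  induction B using Multiset.induction_on with
  | empty =>
    intro d hd
    obtain ⟨m, rfl⟩ : ∃ m, d = m + 1 := ⟨d - 1, by simp at hd; omega⟩
    rw [add_zero, Multiset.map_zero, baseB0]
    have : ((m + 1 : ℕ) : ℤ) = (m : ℤ) + 1 := by push_cast; ring
    rw [this, show m + 1 - 1 = m by omega]
    rfl
  | cons b B ih =>
    intro d hd
    rw [Multiset.card_cons] at hd
    obtain ⟨k, rfl⟩ : ∃ k, d = k + 1 + 1 := ⟨d - 2, by omega⟩
    have hmult : ({x1 + x2} : Multiset R) + (b ::ₘ B) = b ::ₘ (({x1 + x2} : Multiset R) + B) := by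
      rw [Multiset.singleton_add, Multiset.singleton_add, Multiset.cons_swap]
    rw [hmult, Wcons]
    rw [ih (k + 1 + 1) (by omega), ih (k + 1) (by omega)]
    rw [Multiset.map_cons, SD_cons]
    rw [show k + 1 + 1 - 1 = k + 1 by omega, show k + 1 - 1 = k by omega]
    have hu : (y : R) ^ (k + 1) * ((y⁻¹ : Rˣ) : R) = (y : R) ^ k := by
      rw [pow_succ, mul_assoc, Units.mul_inv, mul_one]
    linear_combination (((y:R) - 1) * b *
      SD ({x1, x2} : Multiset R) (B.map (fun b => ((y⁻¹ : Rˣ) : R) * b)) ((k+1 : ℕ) : ℤ)) * hu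


end
end

section
/- For r ≥ 2, the two-variable Schur polynomial specialization S_{r,r}(x_2 + 3x_1 − 2x_2 − (x_1+x_2)) satisfies S_{r,r}({x_2, 3x_1} − {2x_2, x_1+x_2}) = −3^{r−2}(x_2 − 2x_1)(x_1 x_2)^{r−1}(3x_1 − 2x_2). -/
open scoped Classical

noncomputable section

namespace SchurAux

open PowerSeries

abbrev Rg := MvPolynomial (Fin 2) ℤ

def x1 : Rg := MvPolynomial.X 0
def x2 : Rg := MvPolynomial.X 1

def AA : Multiset Rg := {x2, 3 * x1}
def BB : Multiset Rg := {2 * x2, x1 + x2}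

def hs : PowerSeries Rg := genS BB * PowerSeries.invOfUnit (genS AA) 1

def S (n : ℕ) : Rg := PowerSeries.coeff n hs

lemma genS_pair (a b : Rg) :
    genS ({a, b} : Multiset Rg)
      = 1 - C (a + b) * X ^ 1 + C (a * b) * X ^ 2 := by
  show genS (a ::ₘ b ::ₘ 0) = _
  rw [genS]
  simp only [Multiset.map_cons, Multiset.map_zero, Multiset.prod_cons, Multiset.prod_zero,
    map_add, map_mul]
  ring

lemma const_genS_AA : constantCoeff (genS AA) = 1 := by
  rw [AA, genS_pair]
  simp

lemma key : genS AA * hs = genS BB := by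
  rw [hs, ← mul_assoc, mul_comm (genS AA) (genS BB), mul_assoc,
    PowerSeries.mul_invOfUnit _ _ (by simpa using const_genS_AA), mul_one]

lemma coeff_key (n : ℕ) :
    coeff n hs - (x2 + 3 * x1) * coeff n (X ^ 1 * hs)
      + x2 * (3 * x1) * coeff n (X ^ 2 * hs)
      = coeff n (genS BB) := by
  have hk := congrArg (coeff n) key
  rw [AA, genS_pair] at hk
  rw [add_mul, sub_mul, one_mul, mul_assoc, mul_assoc, map_add, map_sub, coeff_C_mul,
    coeff_C_mul] at hk
  exact hk

lemma coeff_BB (n : ℕ) :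
    coeff n (genS BB)
      = (if n = 0 then 1 else 0) - (2 * x2 + (x1 + x2)) * (if n = 1 then 1 else 0)
        + 2 * x2 * (x1 + x2) * (if n = 2 then 1 else 0) := by
  rw [BB, genS_pair, map_add, map_sub, coeff_one, coeff_C_mul, coeff_C_mul, coeff_X_pow,
    coeff_X_pow, mul_ite, mul_ite, mul_one, mul_one, mul_zero, mul_zero]

lemma S0 : S 0 = 1 := by
  have h := coeff_key 0
  rw [coeff_BB, coeff_X_pow_mul', coeff_X_pow_mul'] at h
  simpa [S] using h

lemma S1 : S 1 = 2 * x1 - 2 * x2 := by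
  have h := coeff_key 1
  rw [coeff_BB, coeff_X_pow_mul', coeff_X_pow_mul'] at h
  simp only [S] at *
  norm_num at h
  have h0 := S0
  simp only [S, coeff_zero_eq_constantCoeff] at h0
  rw [h0] at h
  linear_combination h

lemma S2 : S 2 = 6 * x1 ^ 2 - 5 * x1 * x2 := by
  have h := coeff_key 2
  rw [coeff_BB, coeff_X_pow_mul', coeff_X_pow_mul'] at h
  simp only [S] at *
  norm_num at h
  have h0 := S0; have h1 := S1
  simp only [S, coeff_zero_eq_constantCoeff] at h0 h1
  rw [h0, h1] at h
  linear_combination h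

lemma S_rec (n : ℕ) : S (n + 3) = (x2 + 3 * x1) * S (n + 2) - x2 * (3 * x1) * S (n + 1) := by
  have h := coeff_key (n + 3)
  rw [coeff_BB, coeff_X_pow_mul', coeff_X_pow_mul'] at h
  simp only [S] at *
  have t0 : n + 3 ≠ 0 := by omega
  have t1 : n + 3 ≠ 1 := by omega
  have t2 : n + 3 ≠ 2 := by omega
  have e2 : n + 3 - 2 = n + 1 := by omega
  norm_num [t0, t1, t2, e2] at h
  linear_combination h

def D (n : ℕ) : Rg := S (n + 2) * S (n + 2) - S (n + 3) * S (n + 1)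

lemma D_succ (n : ℕ) : D (n + 1) = x2 * (3 * x1) * D n := by
  have h1 := S_rec n
  have h2 := S_rec (n + 1)
  simp only [D]
  have e : n + 1 + 2 = n + 3 := by ring
  have e2 : n + 1 + 3 = n + 4 := by ring
  have e3 : n + 1 + 1 = n + 2 := by ring
  rw [e, e2, e3]
  rw [show n + 4 = n + 1 + 3 from by ring] at h2 ⊢
  rw [show n + 1 + 2 = n + 3 from by ring, show n + 1 + 1 = n + 2 from by ring] at h2
  rw [h2, h1]
  ring

lemma D_zero : D 0 = x1 * x2 * (2 * x1 - x2) * (3 * x1 - 2 * x2) := by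
  have h3 := S_rec 0
  simp only [D, Nat.zero_add] at *
  rw [h3, S2, S1]
  ring

lemma D_eq (n : ℕ) : D n = (x2 * (3 * x1)) ^ n * (x1 * x2 * (2 * x1 - x2) * (3 * x1 - 2 * x2)) := by
  induction n with
  | zero => simpa using D_zero
  | succ k ih => rw [D_succ, ih]; ring

lemma SD_nat (m : ℕ) : SD AA BB (m : ℤ) = S m := by
  simp [SD, S, hs]

theorem main (n : ℕ) :
    SchurD AA BB (fun _ : Fin 2 => n + 2)
      = -(3 : Rg) ^ (n + 2 - 2) * (x2 - 2 * x1) * (x1 * x2) ^ (n + 2 - 1)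
        * (3 * x1 - 2 * x2) := by
  rw [SchurD, Matrix.det_fin_two]
  simp only [Matrix.of_apply, Fin.isValue, Fin.val_zero, Fin.val_one]
  have e1 : ((n + 2 : ℕ) : ℤ) + ((0 : ℕ) : ℤ) - ((0 : ℕ) : ℤ) = ((n + 2 : ℕ) : ℤ) := by push_cast; ring
  have e2 : ((n + 2 : ℕ) : ℤ) + ((1 : ℕ) : ℤ) - ((1 : ℕ) : ℤ) = ((n + 2 : ℕ) : ℤ) := by push_cast; ring
  have e3 : ((n + 2 : ℕ) : ℤ) + ((1 : ℕ) : ℤ) - ((0 : ℕ) : ℤ) = ((n + 3 : ℕ) : ℤ) := by push_cast; ring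
  have e4 : ((n + 2 : ℕ) : ℤ) + ((0 : ℕ) : ℤ) - ((1 : ℕ) : ℤ) = ((n + 1 : ℕ) : ℤ) := by push_cast; ring
  rw [e1, e2, e3, e4]
  simp only [SD_nat]
  have : S (n + 2) * S (n + 2) - S (n + 3) * S (n + 1) = D n := rfl
  rw [this, D_eq]
  rw [show n + 2 - 2 = n from by omega, show n + 2 - 1 = n + 1 from by omega, mul_pow, mul_pow]
  ring

end SchurAux

/-- For `r ≥ 2`,
`S_{(r,r)}({x_2, 3x_1} − {2x_2, x_1+x_2}) = −3^{r−2}(x_2 − 2x_1)(x_1 x_2)^{r−1}(3x_1 − 2x_2)`,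
where `x_1, x_2` are indeterminates. -/
theorem schur_rr_specialization (r : ℕ) (hr : 2 ≤ r) :
    letI R := MvPolynomial (Fin 2) ℤ
    letI x1 : R := MvPolynomial.X 0
    letI x2 : R := MvPolynomial.X 1
    SchurD ({x2, 3 * x1} : Multiset R) ({2 * x2, x1 + x2} : Multiset R)
        (fun _ : Fin 2 => r)
      = -(3 : R) ^ (r - 2) * (x2 - 2 * x1) * (x1 * x2) ^ (r - 1) * (3 * x1 - 2 * x2) := by
  obtain ⟨n, rfl⟩ : ∃ n, r = n + 2 := ⟨r - 2, by omega⟩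
  exact SchurAux.main n

end
end
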